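/- Let Ŝ = S + XR₁XᵀJᵀS with R₁ = [[0, λ₁⁻¹(μ−λ₁)],[μ⁻¹(μ−λ₁), 0]] and X = [x₁ x₂] normalized so XᵀJX = J₂, Sx₁ = λ₁x₁, Sx₂ = λ₁⁻¹x₂. Then Ŝx₁ = μx₁ and Ŝx₂ = μ⁻¹x₂. -/

import Mathlib

open Matrix

/-- For `Ŝ = S + X R₁ Xᵀ Jᵀ S` with `R₁ = [[0, λ₁⁻¹(μ-λ₁)],[μ⁻¹(μ-λ₁), 0]]`,
the eigenvectors `x₁, x₂` of `S` for `λ₁, λ₁⁻¹` satisfy `Ŝ x₁ = μ x₁` and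
`Ŝ x₂ = μ⁻¹ x₂`. -/
theorem eigenvectors_of_Shat (n : ℕ)
    (J : Matrix (Fin n ⊕ Fin n) (Fin n ⊕ Fin n) ℂ)
    (hJ : J = Matrix.fromBlocks 0 1 (-1) 0)
    (S : Matrix (Fin n ⊕ Fin n) (Fin n ⊕ Fin n) ℂ)
    (hS : Sᵀ * J * S = J)
    (lam1 mu : ℂ) (hlam1 : lam1 ≠ 0) (hmu : mu ≠ 0)
    (x1 x2 : Fin n ⊕ Fin n → ℂ)
    (h1 : S.mulVec x1 = lam1 • x1) (h2 : S.mulVec x2 = lam1⁻¹ • x2)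
    (Xm : Matrix (Fin n ⊕ Fin n) (Fin 2) ℂ)
    (hXm : Xm = Matrix.of fun i j => if j = 0 then x1 i else x2 i)
    (hnorm : Xmᵀ * J * Xm = !![0, 1; -1, 0])
    (R1 : Matrix (Fin 2) (Fin 2) ℂ)
    (hR1 : R1 = !![0, lam1⁻¹ * (mu - lam1); mu⁻¹ * (mu - lam1), 0]) :
    (S + Xm * R1 * Xmᵀ * Jᵀ * S).mulVec x1 = mu • x1 ∧
      (S + Xm * R1 * Xmᵀ * Jᵀ * S).mulVec x2 = mu⁻¹ • x2 := by
  have key : ∀ e : Fin 2, Xmᵀ.mulVec (Jᵀ.mulVec (fun i => Xm i e))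
      = fun j => (!![(0:ℂ), 1; -1, 0]) e j := by
    intro e
    funext j
    have h := congrFun (congrFun hnorm e) j
    simp only [Matrix.mul_apply, Matrix.transpose_apply, Matrix.mulVec,
      dotProduct, Finset.sum_mul, Finset.mul_sum] at h ⊢
    rw [← h]
    exact Finset.sum_congr rfl fun i _ => Finset.sum_congr rfl fun k _ => by ring
  have hc0 : (fun i => Xm i 0) = x1 := by funext i; simp [hXm]
  have hc1 : (fun i => Xm i 1) = x2 := by funext i; simp [hXm]
  have k1 : Xmᵀ.mulVec (Jᵀ.mulVec x1) = ![0, 1] := by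
    rw [← hc0, key 0]; funext j; fin_cases j <;> simp
  have k2 : Xmᵀ.mulVec (Jᵀ.mulVec x2) = ![-1, 0] := by
    rw [← hc1, key 1]; funext j; fin_cases j <;> simp
  have r1 : R1.mulVec ![0, 1] = ![lam1⁻¹ * (mu - lam1), 0] := by
    funext j; fin_cases j <;> simp [hR1, Matrix.mulVec, dotProduct, Fin.sum_univ_two]
  have r2 : R1.mulVec ![-1, 0] = ![0, -(mu⁻¹ * (mu - lam1))] := by
    funext j; fin_cases j <;> simp [hR1, Matrix.mulVec, dotProduct, Fin.sum_univ_two]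
  have m1 : ∀ c : ℂ, Xm.mulVec ![c, 0] = c • x1 := by
    intro c; funext i
    simp [hXm, Matrix.mulVec, dotProduct, Fin.sum_univ_two, mul_comm]
  have m2 : ∀ c : ℂ, Xm.mulVec ![0, c] = c • x2 := by
    intro c; funext i
    simp [hXm, Matrix.mulVec, dotProduct, Fin.sum_univ_two, mul_comm]
  have expand : ∀ v, (Xm * R1 * Xmᵀ * Jᵀ * S).mulVec v
      = Xm.mulVec (R1.mulVec (Xmᵀ.mulVec (Jᵀ.mulVec (S.mulVec v)))) := by
    intro v; simp [Matrix.mulVec_mulVec, Matrix.mul_assoc]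
  constructor
  · rw [add_mulVec, expand, h1]
    simp only [Matrix.mulVec_smul]
    rw [k1, r1, m1, smul_smul, ← add_smul]
    congr 1
    field_simp
    ring
  · rw [add_mulVec, expand, h2]
    simp only [Matrix.mulVec_smul]
    rw [k2, r2, m2, smul_smul, ← add_smul]
    congr 1
    field_simp
    ring
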